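/- For every graph G, the tree-layout characterization of edge-treewidth holds: etw(G) equals the minimum over all tree-layouts T = (T,r,τ) of G of max over nodes u of |E_G(X_T(u))|, where X_T(u) is the set of vertices of G mapped into the subtree rooted at u. -/

import Mathlib

open Classical

/-- A finite loopless multigraph: a finite vertex type, a finite edge type, and an
endpoint function assigning to every edge an unordered pair of distinct vertices. -/
structure FinMGraph where
  V : Type
  E : Type
  [fV : Fintype V]
  [fE : Fintype E]
  [dV : DecidableEq V]
  ends : E → Sym2 V
  loopless : ∀ e, ¬ (ends e).IsDiag

attribute [instance] FinMGraph.fV FinMGraph.fE FinMGraph.dV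

namespace FinMGraph

variable (G : FinMGraph)

/-- One-step adjacency inside the vertex set `S` (i.e. in the induced subgraph `G[S]`). -/
def stepIn (S : Set G.V) (a b : G.V) : Prop :=
  a ∈ S ∧ b ∈ S ∧ ∃ e : G.E, G.ends e = s(a, b)

/-- The vertex set of the connected component of `v` in the induced subgraph `G[S]`. -/
def comp (S : Set G.V) (v : G.V) : Set G.V :=
  {w | Relation.ReflTransGen (G.stepIn S) v w}

/-- The number of edges (counted with multiplicity) with exactly one endpoint in `X`. -/
noncomputable def cut (X : Set G.V) : ℕ :=
  Nat.card {e : G.E // ∃ a b, G.ends e = s(a, b) ∧ a ∈ X ∧ b ∉ X}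

/-- For a layout `L` (a linear ordering of the vertices) the set `S_i` of vertices
occurring at position `i` or later. -/
def tail (L : Fin (Fintype.card G.V) ≃ G.V) (i : Fin (Fintype.card G.V)) : Set G.V :=
  {v | i ≤ L.symm v}

/-- The cost `δ^ec(i) = |E_G(C_G(S_i, x_i))|` of position `i` in the layout `L`. -/
noncomputable def cost (L : Fin (Fintype.card G.V) ≃ G.V) (i : Fin (Fintype.card G.V)) : ℕ :=
  G.cut (G.comp (G.tail L i) (L i))

/-- The edge-treewidth of `G`: the minimum over all layouts of the maximum cost. -/
noncomputable def etw : ℕ :=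
  sInf {k | ∃ L : Fin (Fintype.card G.V) ≃ G.V, ∀ i, G.cost L i ≤ k}

end FinMGraph

namespace FinMGraph

variable (G : FinMGraph)

/-- `G` is a forest: every edge is a bridge, i.e. after removing an edge its two
endpoints are no longer connected. -/
def IsForest : Prop :=
  ∀ (e : G.E) (a b : G.V), G.ends e = s(a, b) →
    ¬ Relation.ReflTransGen (fun x y => ∃ f : G.E, f ≠ e ∧ G.ends f = s(x, y)) a b

/-- A cycle of length `k` in `G`, given by an injective cyclic sequence of vertices and an
injective sequence of distinct edges joining consecutive vertices. -/
def IsCycleOn (k : ℕ) (v : ZMod k → G.V) (f : ZMod k → G.E) : Prop :=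
  2 ≤ k ∧ Function.Injective v ∧ Function.Injective f ∧
    ∀ i : ZMod k, G.ends (f i) = s(v i, v (i + 1))

/-- `G` is a cactus: every edge belongs to at most one cycle, i.e. any two cycles
sharing an edge have the same edge set. -/
def IsCactus : Prop :=
  ∀ (k₁ : ℕ) (v₁ : ZMod k₁ → G.V) (f₁ : ZMod k₁ → G.E)
    (k₂ : ℕ) (v₂ : ZMod k₂ → G.V) (f₂ : ZMod k₂ → G.E),
    G.IsCycleOn k₁ v₁ f₁ → G.IsCycleOn k₂ v₂ f₂ →
    (∃ e, e ∈ Set.range f₁ ∧ e ∈ Set.range f₂) → Set.range f₁ = Set.range f₂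

/-- A walk from `a` to `b` using the listed edges, in order. -/
inductive Walk : G.V → G.V → List G.E → Prop
  | nil (v : G.V) : Walk v v []
  | cons {a b c : G.V} {e : G.E} {es : List G.E} :
      G.ends e = s(a, b) → Walk b c es → Walk a c (e :: es)

/-- `H` is a subgraph of `G`. -/
def IsSubgraphOf (H : FinMGraph) : Prop :=
  ∃ (φ : H.V ↪ G.V) (ψ : H.E ↪ G.E), ∀ e, G.ends (ψ e) = (H.ends e).map φ

/-- The edge-degree of `v`: the number of incident edges, counted with multiplicity. -/
noncomputable def edeg (v : G.V) : ℕ :=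
  Nat.card {e : G.E // v ∈ G.ends e}

/-- The vertex-degree of `v`: the number of distinct neighbours of `v`. -/
noncomputable def vdeg (v : G.V) : ℕ :=
  Nat.card {w : G.V // w ≠ v ∧ ∃ e : G.E, G.ends e = s(v, w)}

/-- `H` is obtained from `G` by contracting one edge `e = {x,y}` whose endpoints both
have vertex-degree two and edge-degree two. -/
def ContractStep (H : FinMGraph) : Prop :=
  ∃ (x y : G.V) (e : G.E), G.ends e = s(x, y) ∧
    G.vdeg x = 2 ∧ G.edeg x = 2 ∧ G.vdeg y = 2 ∧ G.edeg y = 2 ∧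
    ∃ (φ : G.V → H.V) (ψ : {f : G.E // f ≠ e} ≃ H.E),
      Function.Surjective φ ∧
      (∀ v w : G.V, φ v = φ w ↔ (v = w ∨ (v = x ∧ w = y) ∨ (v = y ∧ w = x))) ∧
      ∀ f : {f : G.E // f ≠ e}, H.ends (ψ f) = (G.ends f.1).map φ

/-- `H` is a weak topological minor of `G`: `H` is obtained from a subgraph of `G` by
repeatedly contracting edges whose endpoints have vertex-degree two and edge-degree two. -/
def IsWeakTopMinorOf (H G : FinMGraph) : Prop :=
  ∃ S : FinMGraph, S.IsSubgraphOf G ∧ Relation.ReflTransGen FinMGraph.ContractStep S H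

/-- The induced subgraph `G[S]` is connected. -/
def ConnectedOn (S : Set G.V) : Prop :=
  ∀ a ∈ S, ∀ b ∈ S, Relation.ReflTransGen (G.stepIn S) a b

/-- `G` is connected. -/
def Connected : Prop := G.ConnectedOn Set.univ

/-- `G` is biconnected: nonempty and removing any single vertex leaves it connected. -/
def Biconnected : Prop :=
  Nonempty G.V ∧ ∀ v : G.V, G.ConnectedOn {w | w ≠ v}

/-- The minimum cost over layouts whose first vertex is `u`. -/
noncomputable def etwFrom (u : G.V) : ℕ :=
  sInf {k | ∃ L : Fin (Fintype.card G.V) ≃ G.V, (L.symm u : ℕ) = 0 ∧ ∀ i, G.cost L i ≤ k}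

/-- The sub-multigraph of `G` on the same vertex set whose edges are those in `F`. -/
noncomputable def restrictE (F : Set G.E) : FinMGraph :=
  { V := G.V, E := {e : G.E // e ∈ F}, ends := fun e => G.ends e.1,
    loopless := fun e => G.loopless e.1 }

/-- Two edges lie in a common block: they are equal or some cycle contains both. -/
def SameBlock (e f : G.E) : Prop :=
  e = f ∨ ∃ (k : ℕ) (v : ZMod k → G.V) (g : ZMod k → G.E),
    G.IsCycleOn k v g ∧ e ∈ Set.range g ∧ f ∈ Set.range g

/-- The block of `G` containing the edge `e`. -/
noncomputable def blockOf (e : G.E) : FinMGraph :=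
  G.restrictE {f | G.SameBlock e f}

/-- The number of vertices outside `X` having a neighbour in `X`. -/
noncomputable def ncut (X : Set G.V) : ℕ :=
  Nat.card {v : G.V // v ∉ X ∧ ∃ x ∈ X, ∃ e : G.E, G.ends e = s(v, x)}

/-- Treewidth, via its layout characterization: the minimum over layouts of the
maximum of `|N_G(C_G(S_i, x_i))|`. -/
noncomputable def twl : ℕ :=
  sInf {k | ∃ L : Fin (Fintype.card G.V) ≃ G.V,
    ∀ i, G.ncut (G.comp (G.tail L i) (L i)) ≤ k}

/-- The maximum edge-degree of `G`. -/
noncomputable def maxEdeg : ℕ :=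
  sSup {m | ∃ v : G.V, m = G.edeg v}

end FinMGraph

/-- A tree-layout of `G`: a rooted tree (given by a parent function under which every
node eventually reaches the root) together with an injective mapping `τ` of the vertices
of `G` into the nodes such that the endpoints of every edge are mapped to comparable
(ancestor/descendant) nodes. -/
structure TreeLayout (G : FinMGraph) where
  T : Type
  par : T → T
  root : T
  par_root : par root = root
  reaches_root : ∀ t : T, ∃ n : ℕ, par^[n] t = root
  τ : G.V → T
  inj : Function.Injective τ
  comparable : ∀ (e : G.E) (a b : G.V), G.ends e = s(a, b) →
    (∃ n : ℕ, par^[n] (τ a) = τ b) ∨ (∃ n : ℕ, par^[n] (τ b) = τ a)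

/-- The set `X_T(u)` of vertices of `G` mapped to descendants of the node `u`. -/
def TreeLayout.region {G : FinMGraph} (TL : TreeLayout G) (u : TL.T) : Set G.V :=
  {x | ∃ n : ℕ, TL.par^[n] (TL.τ x) = u}

/-- The theta graph `θ k`: two vertices joined by `k` parallel edges. -/
def theta (k : ℕ) : FinMGraph :=
  { V := Fin 2, E := Fin k, ends := fun _ => s((0 : Fin 2), 1),
    loopless := fun _ => by rw [Sym2.mk_isDiag_iff]; decide }

/-- The cycle on `n ≥ 2` vertices. -/
def cyc (n : ℕ) (h : 2 ≤ n) : FinMGraph :=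
  letI : NeZero n := ⟨by omega⟩
  letI : Fact (1 < n) := ⟨h⟩
  { V := ZMod n, E := ZMod n, ends := fun i => s(i, i + 1),
    loopless := fun i => by
      rw [Sym2.mk_isDiag_iff]
      exact fun hh => one_ne_zero (left_eq_add.mp hh) }

/-- The multigraph `Z_n^3`, obtained from the cycle on `n ≥ 2` vertices by doubling
every edge. -/
def Z3 (n : ℕ) (h : 2 ≤ n) : FinMGraph :=
  letI : NeZero n := ⟨by omega⟩
  letI : Fact (1 < n) := ⟨h⟩
  { V := ZMod n, E := ZMod n × Fin 2, ends := fun p => s(p.1, p.1 + 1),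
    loopless := fun p => by
      rw [Sym2.mk_isDiag_iff]
      exact fun hh => one_ne_zero (left_eq_add.mp hh) }

/-! ### Auxiliary development for the tree-layout characterization -/

attribute [local instance] Classical.propDecidable

namespace FinMGraph

variable {G : FinMGraph}

lemma stepIn_symm {S : Set G.V} {a b : G.V} (h : G.stepIn S a b) : G.stepIn S b a := by
  obtain ⟨ha, hb, e, he⟩ := h
  exact ⟨hb, ha, e, by rw [he, Sym2.eq_swap]⟩

lemma mem_comp_self (S : Set G.V) (v : G.V) : v ∈ G.comp S v := Relation.ReflTransGen.refl

lemma comp_subset {S : Set G.V} {v : G.V} (hv : v ∈ S) : G.comp S v ⊆ S := by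
  intro w hw
  induction hw with
  | refl => exact hv
  | tail _ h _ => exact h.2.1

lemma comp_symm_mem {S : Set G.V} {v w : G.V} (h : w ∈ G.comp S v) : v ∈ G.comp S w :=
  haveI : Std.Symm (G.stepIn S) := ⟨fun _ _ hh => stepIn_symm hh⟩
  Std.Symm.symm (r := Relation.ReflTransGen (G.stepIn S)) _ _ h

lemma comp_mono {S S' : Set G.V} (hS : S ⊆ S') (v : G.V) :
    G.comp S v ⊆ G.comp S' v := fun _ h =>
  Relation.ReflTransGen.mono (fun a b hab => ⟨hS hab.1, hS hab.2.1, hab.2.2⟩) _ _ h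

lemma comp_step {S : Set G.V} {v a b : G.V} (ha : a ∈ G.comp S v) (h : G.stepIn S a b) :
    b ∈ G.comp S v := Relation.ReflTransGen.tail ha h

lemma mem_tail_self (L : Fin (Fintype.card G.V) ≃ G.V) (i : Fin (Fintype.card G.V)) :
    L i ∈ G.tail L i := by
  show i ≤ L.symm (L i)
  simp

lemma tail_anti (L : Fin (Fintype.card G.V) ≃ G.V) {i j : Fin (Fintype.card G.V)}
    (h : i ≤ j) : G.tail L j ⊆ G.tail L i := fun v hv => le_trans h hv

lemma cut_le_cut {X Y : Set G.V}
    (h : ∀ e a b, G.ends e = s(a, b) → a ∈ X → b ∉ X → a ∈ Y ∧ b ∉ Y) :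
    G.cut X ≤ G.cut Y := by
  apply Nat.card_le_card_of_injective
    (fun p => (⟨p.1, by
      obtain ⟨a, b, he, ha, hb⟩ := p.2
      exact ⟨a, b, he, (h _ _ _ he ha hb).1, (h _ _ _ he ha hb).2⟩⟩ :
      {e : G.E // ∃ a b, G.ends e = s(a, b) ∧ a ∈ Y ∧ b ∉ Y}))
  intro p q hpq
  simpa [Subtype.ext_iff] using hpq

lemma cut_univ (G : FinMGraph) : G.cut (Set.univ : Set G.V) = 0 := by
  have : IsEmpty {e : G.E // ∃ a b, G.ends e = s(a, b) ∧ a ∈ (Set.univ : Set G.V) ∧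
      b ∉ (Set.univ : Set G.V)} := ⟨fun ⟨_, _, b, _, _, hb⟩ => hb (Set.mem_univ b)⟩
  exact Nat.card_of_isEmpty

lemma cut_congr {X Y : Set G.V} (h : X = Y) : G.cut X = G.cut Y := by rw [h]

section LayoutToTree

variable (G) (L : Fin (Fintype.card G.V) ≃ G.V)

/-- The component of the `i`-th tail containing the `i`-th vertex. -/
def Cset (i : Fin (Fintype.card G.V)) : Set G.V := G.comp (G.tail L i) (L i)

lemma mem_tail_of_mem_Cset {i : Fin (Fintype.card G.V)} {x : G.V} (hx : x ∈ Cset G L i) :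
    i ≤ L.symm x := comp_subset (mem_tail_self L i) hx

lemma Cset_laminar {i j : Fin (Fintype.card G.V)} (hij : i ≤ j) {x : G.V}
    (hxi : x ∈ Cset G L i) (hxj : x ∈ Cset G L j) : Cset G L j ⊆ Cset G L i := by
  intro u hu
  have t : G.tail L j ⊆ G.tail L i := tail_anti L hij
  have h1 : L j ∈ G.comp (G.tail L i) x := comp_mono t x (comp_symm_mem hxj)
  have h2 : u ∈ G.comp (G.tail L i) (L j) := comp_mono t (L j) hu
  exact Relation.ReflTransGen.trans hxi (Relation.ReflTransGen.trans h1 h2)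

/-- Positions `j` strictly before `x` whose component contains `x`. -/
noncomputable def pset (x : G.V) : Finset (Fin (Fintype.card G.V)) :=
  Finset.univ.filter (fun j => j < L.symm x ∧ x ∈ Cset G L j)

lemma mem_pset {x : G.V} {j : Fin (Fintype.card G.V)} :
    j ∈ pset G L x ↔ j < L.symm x ∧ x ∈ Cset G L j := by
  simp [pset]

/-- The parent of a vertex in the tree layout built from the linear layout `L`. -/
noncomputable def par0 (x : G.V) : G.V ⊕ Unit :=
  if h : (pset G L x).Nonempty then Sum.inl (L ((pset G L x).max' h)) else Sum.inr ()

/-- The parent function of the tree layout built from `L`. -/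
noncomputable def parT : G.V ⊕ Unit → G.V ⊕ Unit
  | .inl x => par0 G L x
  | .inr _ => .inr ()

lemma parT_inl (x : G.V) : parT G L (Sum.inl x) = par0 G L x := rfl

lemma parT_inr_iter (m : ℕ) : (parT G L)^[m] (Sum.inr ()) = Sum.inr () :=
  Function.iterate_fixed rfl m

lemma anc : ∀ x : G.V, ∀ i : Fin (Fintype.card G.V), x ∈ Cset G L i →
    ∃ m, (parT G L)^[m] (Sum.inl x) = Sum.inl (L i) := by
  have main : ∀ n : ℕ, ∀ x : G.V, (L.symm x : ℕ) = n → ∀ i, x ∈ Cset G L i →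
      ∃ m, (parT G L)^[m] (Sum.inl x) = Sum.inl (L i) := by
    intro n
    induction n using Nat.strong_induction_on with
    | _ n IH =>
      intro x hn i hx
      have hi : i ≤ L.symm x := mem_tail_of_mem_Cset G L hx
      rcases eq_or_lt_of_le hi with heq | hlt
      · have hxL : x = L i := by rw [heq]; simp
        exact ⟨0, by simp [hxL]⟩
      · have hmem : i ∈ pset G L x := (mem_pset G L).mpr ⟨hlt, hx⟩
        have hne : (pset G L x).Nonempty := ⟨i, hmem⟩
        set j := (pset G L x).max' hne with hjdef
        have hj : j < L.symm x ∧ x ∈ Cset G L j :=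
          (mem_pset G L).mp (Finset.max'_mem _ hne)
        have hij : i ≤ j := Finset.le_max' _ i hmem
        have hLj : L j ∈ Cset G L i :=
          Cset_laminar G L hij hx hj.2 (mem_comp_self _ _)
        obtain ⟨m, hm⟩ := IH (j : ℕ) (by rw [← hn]; exact hj.1) (L j) (by simp) i hLj
        refine ⟨m + 1, ?_⟩
        rw [Function.iterate_succ_apply, parT_inl, par0, dif_pos hne, ← hjdef, hm]
  exact fun x i hx => main (L.symm x : ℕ) x rfl i hx

lemma reach : ∀ x : G.V, ∃ m, (parT G L)^[m] (Sum.inl x) = Sum.inr () := by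
  have main : ∀ n : ℕ, ∀ x : G.V, (L.symm x : ℕ) = n →
      ∃ m, (parT G L)^[m] (Sum.inl x) = Sum.inr () := by
    intro n
    induction n using Nat.strong_induction_on with
    | _ n IH =>
      intro x hn
      by_cases h : (pset G L x).Nonempty
      · set j := (pset G L x).max' h with hjdef
        have hj : j < L.symm x ∧ x ∈ Cset G L j :=
          (mem_pset G L).mp (Finset.max'_mem _ h)
        obtain ⟨m, hm⟩ := IH (j : ℕ) (by rw [← hn]; exact hj.1) (L j) (by simp)
        refine ⟨m + 1, ?_⟩
        rw [Function.iterate_succ_apply, parT_inl, par0, dif_pos h, ← hjdef, hm]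
      · exact ⟨1, by rw [Function.iterate_one, parT_inl, par0, dif_neg h]⟩
  exact fun x => main (L.symm x : ℕ) x rfl

/-- The tree layout associated with a linear layout. -/
noncomputable def TLofL : TreeLayout G where
  T := G.V ⊕ Unit
  par := parT G L
  root := Sum.inr ()
  par_root := rfl
  reaches_root := by
    rintro (x | u)
    · exact reach G L x
    · exact ⟨0, rfl⟩
  τ := Sum.inl
  inj := Sum.inl_injective
  comparable := by
    have key : ∀ (e : G.E) (a b : G.V), G.ends e = s(a, b) → L.symm a ≤ L.symm b →
        ∃ m, (parT G L)^[m] (Sum.inl b) = Sum.inl a := by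
      intro e a b he hab
      have hb : b ∈ Cset G L (L.symm a) := by
        refine comp_step (mem_comp_self _ _) ⟨mem_tail_self L _, hab, e, ?_⟩
        rw [he]; simp
      obtain ⟨m, hm⟩ := anc G L b (L.symm a) hb
      exact ⟨m, by simpa using hm⟩
    intro e a b he
    rcases le_total (L.symm a) (L.symm b) with h | h
    · exact Or.inr (key e a b he h)
    · exact Or.inl (key e b a (by rw [he, Sym2.eq_swap]) h)

lemma region_inr : (TLofL G L).region (Sum.inr ()) = Set.univ :=
  Set.eq_univ_of_forall (fun x => reach G L x)

lemma region_sub : ∀ (m : ℕ) (x v : G.V), (parT G L)^[m] (Sum.inl x) = Sum.inl v →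
    x ∈ Cset G L (L.symm v) := by
  intro m
  induction m with
  | zero =>
    intro x v h
    have hxv : x = v := Sum.inl_injective h
    subst hxv
    have : L (L.symm x) = x := by simp
    rw [Cset, this]
    exact mem_comp_self _ _
  | succ m IH =>
    intro x v h
    rw [Function.iterate_succ_apply, parT_inl] at h
    by_cases hne : (pset G L x).Nonempty
    · rw [par0, dif_pos hne] at h
      set j := (pset G L x).max' hne with hjdef
      have hj : j < L.symm x ∧ x ∈ Cset G L j :=
        (mem_pset G L).mp (Finset.max'_mem _ hne)
      have hp : L j ∈ Cset G L (L.symm v) := IH (L j) v h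
      have h1 : L.symm v ≤ j := by
        have := mem_tail_of_mem_Cset G L hp
        simpa using this
      have hLjj : L j ∈ Cset G L j := mem_comp_self _ _
      exact Cset_laminar G L h1 hp hLjj hj.2
    · rw [par0, dif_neg hne, parT_inr_iter] at h
      exact absurd h (by simp)

lemma region_inl (v : G.V) :
    (TLofL G L).region (Sum.inl v) = Cset G L (L.symm v) := by
  ext x
  constructor
  · rintro ⟨m, hm⟩
    exact region_sub G L m x v hm
  · intro hx
    obtain ⟨m, hm⟩ := anc G L x (L.symm v) hx
    exact ⟨m, by rw [Equiv.apply_symm_apply] at hm; exact hm⟩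

end LayoutToTree

end FinMGraph

variable {G : FinMGraph}

/-- The depth of a node in a tree layout. -/
noncomputable def TreeLayout.depth (TL : TreeLayout G) (t : TL.T) : ℕ :=
  Nat.find (TL.reaches_root t)

lemma TreeLayout.depth_spec (TL : TreeLayout G) (t : TL.T) :
    TL.par^[TL.depth t] t = TL.root := Nat.find_spec (TL.reaches_root t)

lemma TreeLayout.root_iter (TL : TreeLayout G) (m : ℕ) :
    TL.par^[m] TL.root = TL.root := Function.iterate_fixed TL.par_root m

lemma TreeLayout.depth_lt (TL : TreeLayout G) {t u : TL.T} {m : ℕ}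
    (h : TL.par^[m] t = u) (hne : u ≠ t) : TL.depth u < TL.depth t := by
  set d := TL.depth t with hd
  have hm0 : m ≠ 0 := by rintro rfl; simp at h; exact hne h.symm
  rcases le_or_gt m d with hmd | hdm
  · have h0 : TL.par^[d - m] u = TL.root := by
      rw [← h, ← Function.iterate_add_apply, Nat.sub_add_cancel hmd, hd]
      exact TL.depth_spec t
    have hle : TL.depth u ≤ d - m := Nat.find_min' _ h0
    omega
  · have hroot : u = TL.root := by
      rw [← h]
      have hm : m = (m - d) + d := (Nat.sub_add_cancel hdm.le).symm
      rw [hm, Function.iterate_add_apply]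
      rw [hd] at *
      rw [TL.depth_spec t]
      exact TL.root_iter _
    have h0 : TL.depth u = 0 :=
      Nat.le_zero.mp (Nat.find_min' _ (by simpa using hroot))
    have hd0 : d ≠ 0 := by
      intro h0'
      have ht : t = TL.root := by
        have := TL.depth_spec t
        rw [← hd, h0'] at this
        simpa using this
      exact hne (hroot.trans ht.symm)
    omega


/-- the tree-layout characterization of edge-treewidth: `etw(G)` equals the
minimum over all tree-layouts `(T, r, τ)` of `G` of the maximum over nodes `u` of
`|E_G(X_T(u))|`. -/
theorem etw_eq_treeLayout_min (G : FinMGraph) :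
    G.etw = sInf {k | ∃ TL : TreeLayout G, ∀ u : TL.T, G.cut (TL.region u) ≤ k} := by
  unfold FinMGraph.etw
  congr 1
  ext k
  constructor
  · -- from a linear layout, build a tree layout
    rintro ⟨L, hL⟩
    refine ⟨FinMGraph.TLofL G L, ?_⟩
    rintro (v | u)
    · rw [FinMGraph.cut_congr (FinMGraph.region_inl G L v)]
      exact hL (L.symm v)
    · rw [FinMGraph.cut_congr (FinMGraph.region_inr G L), FinMGraph.cut_univ]
      exact Nat.zero_le k
  · -- from a tree layout, build a linear layout
    rintro ⟨TL, hTL⟩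
    let ev : G.V ≃ Fin (Fintype.card G.V) := Fintype.equivFin G.V
    let key : G.V → ℕ := fun x => TL.depth (TL.τ x) * Fintype.card G.V + (ev x : ℕ)
    let σ : Equiv.Perm (Fin (Fintype.card G.V)) := Tuple.sort (fun i => key (ev.symm i))
    let L : Fin (Fintype.card G.V) ≃ G.V := σ.trans ev.symm
    have mono : Monotone (fun i => key (L i)) :=
      Tuple.monotone_sort (fun i => key (ev.symm i))
    have key_lt : ∀ a b : G.V, TL.depth (TL.τ a) < TL.depth (TL.τ b) → key a < key b := by
      intro a b hab
      have ha : (ev a : ℕ) < Fintype.card G.V := (ev a).isLt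
      calc key a = TL.depth (TL.τ a) * Fintype.card G.V + (ev a : ℕ) := rfl
        _ < TL.depth (TL.τ a) * Fintype.card G.V + Fintype.card G.V :=
            Nat.add_lt_add_left ha _
        _ = (TL.depth (TL.τ a) + 1) * Fintype.card G.V := (Nat.succ_mul _ _).symm
        _ ≤ TL.depth (TL.τ b) * Fintype.card G.V := Nat.mul_le_mul_right _ hab
        _ ≤ key b := Nat.le_add_right _ _
    have idx_lt : ∀ a b : G.V, a ≠ b → (∃ m, TL.par^[m] (TL.τ a) = TL.τ b) →
        L.symm b < L.symm a := by
      rintro a b hab ⟨m, hm⟩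
      have hdep : TL.depth (TL.τ b) < TL.depth (TL.τ a) :=
        TL.depth_lt hm (fun hh => hab (TL.inj hh.symm))
      have hkey : key b < key a := key_lt b a hdep
      by_contra hcon
      push_neg at hcon
      have h2 := mono hcon
      simp only [Equiv.apply_symm_apply] at h2
      omega
    refine ⟨L, ?_⟩
    intro i
    have hxi : L.symm (L i) = i := by simp
    have claim1 : ∀ c, c ∈ G.comp (G.tail L i) (L i) → c ∈ TL.region (TL.τ (L i)) := by
      intro c hc
      simp only [FinMGraph.comp, Set.mem_setOf_eq] at hc
      induction hc with
      | refl => exact ⟨0, rfl⟩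
      | @tail p q hxp hpq ih =>
        obtain ⟨hpS, hqS, e, he⟩ := hpq
        obtain ⟨m', hm'⟩ := ih
        rcases TL.comparable e p q he with ⟨m, hm⟩ | ⟨m, hm⟩
        · rcases le_or_gt m m' with hmm | hmm
          · refine ⟨m' - m, ?_⟩
            rw [← hm, ← Function.iterate_add_apply, Nat.sub_add_cancel hmm, hm']
          · by_cases hq : q = L i
            · exact ⟨0, by simp [hq]⟩
            · exfalso
              have hanc : ∃ mm, TL.par^[mm] (TL.τ (L i)) = TL.τ q :=
                ⟨m - m', by
                  rw [← hm', ← Function.iterate_add_apply, Nat.sub_add_cancel hmm.le, hm]⟩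
              have h2 := idx_lt (L i) q (Ne.symm hq) hanc
              rw [hxi] at h2
              exact absurd (hqS : i ≤ L.symm q) (not_le.mpr h2)
        · exact ⟨m' + m, by rw [Function.iterate_add_apply, hm, hm']⟩
    have hcut : G.cut (G.comp (G.tail L i) (L i)) ≤ G.cut (TL.region (TL.τ (L i))) := by
      apply FinMGraph.cut_le_cut
      intro e a b he ha hb
      refine ⟨claim1 a ha, ?_⟩
      intro hbR
      by_cases hbS : b ∈ G.tail L i
      · exact hb (FinMGraph.comp_step ha
          ⟨FinMGraph.comp_subset (FinMGraph.mem_tail_self L i) ha, hbS, e, he⟩)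
      · by_cases hbx : b = L i
        · exact hbS (by rw [hbx]; exact FinMGraph.mem_tail_self L i)
        · have h2 := idx_lt b (L i) hbx hbR
          rw [hxi] at h2
          exact hbS (h2.le : i ≤ L.symm b)
    exact le_trans hcut (hTL (TL.τ (L i)))
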